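/- arXiv:math/0403331 — 2 statements merged into one kernel-verified Lean document; each statement's English description precedes it below -/
import Mathlib

section
/- For every integer n ≥ 1, the formal power series P_n = Σ_{ν=0}^{∞} q^{νn} (1−q^n)(1−q^{n+1})⋯(1−q^{n+ν}) in ℤ[[q]] satisfies the recurrence P_n = 1 − q^{2n+1} − q^{3n+2} P_{n+1}. -/
/-- The sum `∑_{ν=0}^∞ f ν` of a family of power series in `ℤ[[q]]` whose `ν`-th member
has `q`-adic order at least `ν`: its coefficient at `q^d` is the (finite) sum of the
coefficients at `q^d` of `f 0, …, f d`. -/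
noncomputable def seriesSum (f : ℕ → PowerSeries ℤ) : PowerSeries ℤ :=
  PowerSeries.mk fun d => PowerSeries.coeff (R := ℤ) d (∑ ν ∈ Finset.range (d + 1), f ν)

/-- Euler's tower: `P_n = ∑_{ν=0}^∞ q^{νn} (1-q^n)(1-q^{n+1})⋯(1-q^{n+ν}) ∈ ℤ[[q]]`. -/
noncomputable def eulerP (n : ℕ) : PowerSeries ℤ :=
  seriesSum fun ν =>
    PowerSeries.X ^ (ν * n) * ∏ i ∈ Finset.range (ν + 1), (1 - PowerSeries.X ^ (n + i))

open Finset PowerSeries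

/-- The `ν`-th term of Euler's tower `P_n`. -/
noncomputable def eulerA (n ν : ℕ) : PowerSeries ℤ :=
  PowerSeries.X ^ (ν * n) * ∏ i ∈ Finset.range (ν + 1), (1 - PowerSeries.X ^ (n + i))

/-- The auxiliary product `(1-q^{n+1})⋯(1-q^{n+k})`. -/
noncomputable def eulerS (n k : ℕ) : PowerSeries ℤ :=
  ∏ i ∈ Finset.range k, (1 - PowerSeries.X ^ (n + 1 + i))

lemma eulerP_eq (n : ℕ) : eulerP n = seriesSum (eulerA n) := rfl

lemma coeff_seriesSum (f : ℕ → PowerSeries ℤ) (d : ℕ) :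
    PowerSeries.coeff (R := ℤ) d (seriesSum f)
      = PowerSeries.coeff (R := ℤ) d (∑ ν ∈ Finset.range (d + 1), f ν) :=
  PowerSeries.coeff_mk d _

lemma coeff_X_pow_mul'' (g : PowerSeries ℤ) (k e : ℕ) :
    PowerSeries.coeff (R := ℤ) e (PowerSeries.X ^ k * g) =
      if k ≤ e then PowerSeries.coeff (R := ℤ) (e - k) g else 0 := by
  rw [mul_comm (PowerSeries.X ^ k) g, PowerSeries.coeff_mul_X_pow']

lemma coeff_X_pow_mul_eq_zero {m e : ℕ} (h : e < m) (g : PowerSeries ℤ) :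
    PowerSeries.coeff (R := ℤ) e (PowerSeries.X ^ m * g) = 0 := by
  rw [coeff_X_pow_mul'', if_neg (by omega)]

lemma coeff_eulerA_eq_zero {n ν e : ℕ} (hn : 1 ≤ n) (h : e < ν) :
    PowerSeries.coeff (R := ℤ) e (eulerA n ν) = 0 := by
  apply coeff_X_pow_mul_eq_zero
  calc e < ν := h
    _ ≤ ν * n := Nat.le_mul_of_pos_right ν hn

/-- Telescoping identity:
`a_{ν+1}(n) + q^{3n+2} a_ν(n+1) = q^{(ν+1)n} S_{ν+1} - q^{(ν+2)n} S_{ν+2}`. -/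
lemma eulerA_key (n ν : ℕ) :
    eulerA n (ν + 1) + PowerSeries.X ^ (3 * n + 2) * eulerA (n + 1) ν
      = PowerSeries.X ^ ((ν + 1) * n) * eulerS n (ν + 1)
        - PowerSeries.X ^ ((ν + 2) * n) * eulerS n (ν + 2) := by
  have h1 : ∏ i ∈ Finset.range (ν + 2), (1 - (PowerSeries.X : PowerSeries ℤ) ^ (n + i))
      = eulerS n (ν + 1) * (1 - PowerSeries.X ^ n) := by
    rw [Finset.prod_range_succ' (fun i => (1 - (PowerSeries.X : PowerSeries ℤ) ^ (n + i)))]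
    rw [Nat.add_zero, eulerS]
    congr 1
    exact Finset.prod_congr rfl fun i _ => by rw [show n + (i + 1) = n + 1 + i from by omega]
  have h2 : eulerA (n + 1) ν = PowerSeries.X ^ (ν * (n + 1)) * eulerS n (ν + 1) := rfl
  have h3 : eulerS n (ν + 2) = eulerS n (ν + 1) * (1 - PowerSeries.X ^ (n + 1 + (ν + 1))) :=
    Finset.prod_range_succ _ _
  rw [eulerA, h1, h2, h3]
  ring

/-- Exact finite-sum form of Euler's recurrence. -/
lemma eulerA_finsum (n d : ℕ) :
    (∑ ν ∈ Finset.range (d + 1), eulerA n ν)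
      + PowerSeries.X ^ (3 * n + 2) * ∑ ν ∈ Finset.range (d + 1), eulerA (n + 1) ν
    = 1 - PowerSeries.X ^ (2 * n + 1)
      - PowerSeries.X ^ ((d + 1) * n) * eulerS n (d + 1)
      + PowerSeries.X ^ (3 * n + 2) * eulerA (n + 1) d := by
  induction d with
  | zero =>
      have e1 : eulerA n 0 = 1 - PowerSeries.X ^ n := by
        simp [eulerA]
      have e2 : eulerA (n + 1) 0 = 1 - PowerSeries.X ^ (n + 1) := by
        simp [eulerA]
      have e3 : eulerS n (0 + 1) = 1 - PowerSeries.X ^ (n + 1) := by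
        simp [eulerS]
      rw [Finset.sum_range_one, Finset.sum_range_one, e1, e2, e3]
      ring
  | succ d ih =>
      rw [Finset.sum_range_succ, Finset.sum_range_succ (f := eulerA (n + 1))]
      linear_combination ih + eulerA_key n d

/-- Euler's recurrence: for every `n ≥ 1`, `P_n = 1 - q^{2n+1} - q^{3n+2} P_{n+1}`. -/
theorem eulerP_recurrence (n : ℕ) (hn : 1 ≤ n) :
    eulerP n = 1 - PowerSeries.X ^ (2 * n + 1) - PowerSeries.X ^ (3 * n + 2) * eulerP (n + 1) := by
  ext d
  have hL : PowerSeries.coeff (R := ℤ) d (eulerP n)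
      = PowerSeries.coeff (R := ℤ) d (∑ ν ∈ Finset.range (d + 1), eulerA n ν) := by
    rw [eulerP_eq, coeff_seriesSum]
  have hR : PowerSeries.coeff (R := ℤ) d (PowerSeries.X ^ (3 * n + 2) * eulerP (n + 1))
      = PowerSeries.coeff (R := ℤ) d
          (PowerSeries.X ^ (3 * n + 2) * ∑ ν ∈ Finset.range (d + 1), eulerA (n + 1) ν) := by
    rw [coeff_X_pow_mul'', coeff_X_pow_mul'']
    split_ifs with h
    · rw [eulerP_eq, coeff_seriesSum, map_sum, map_sum]
      refine Finset.sum_subset (Finset.range_subset_range.2 (by omega : d - (3 * n + 2) + 1 ≤ d + 1)) ?_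
      intro ν _ hν
      simp only [Finset.mem_range, not_lt] at hν
      exact coeff_eulerA_eq_zero (by omega) (by omega)
    · rfl
  rw [hL, map_sub, map_sub, hR, ← map_sub, ← map_sub]
  have key := eulerA_finsum n d
  have hrw : (∑ ν ∈ Finset.range (d + 1), eulerA n ν)
      = (1 - PowerSeries.X ^ (2 * n + 1)
          - PowerSeries.X ^ (3 * n + 2) * ∑ ν ∈ Finset.range (d + 1), eulerA (n + 1) ν)
        - PowerSeries.X ^ ((d + 1) * n) * eulerS n (d + 1)
        + PowerSeries.X ^ (3 * n + 2) * eulerA (n + 1) d := by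
    linear_combination key
  rw [hrw, map_add, map_sub]
  have h1 : PowerSeries.coeff (R := ℤ) d (PowerSeries.X ^ ((d + 1) * n) * eulerS n (d + 1)) = 0 :=
    coeff_X_pow_mul_eq_zero (by nlinarith) _
  have h2 : PowerSeries.coeff (R := ℤ) d (PowerSeries.X ^ (3 * n + 2) * eulerA (n + 1) d) = 0 := by
    rw [eulerA, ← mul_assoc, ← pow_add]
    exact coeff_X_pow_mul_eq_zero (by nlinarith) _
  rw [h1, h2]; ring
end

section
/- For every integer ℓ ≥ 1, the formal power series P_ℓ = Σ_{ν=0}^{∞} q^{νℓ} (1−q^ℓ)(1−q^{ℓ+1})⋯(1−q^{ℓ+ν}) in ℤ[[q]] equals Σ_{n=0}^{∞} (−1)^n q^{3ℓn + n(3n+1)/2} (1 − q^{2ℓ+2n+1}). -/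
open PowerSeries Finset

/-- Trimming/extension: coefficient `d` of `seriesSum f` equals coefficient `d` of any
partial sum `∑_{ν < N} f ν` with `N > d`, provided `X^ν ∣ f ν`. -/
lemma coeff_seriesSum_eq (f : ℕ → PowerSeries ℤ) (h : ∀ ν, (X : PowerSeries ℤ) ^ ν ∣ f ν)
    {d N : ℕ} (hN : d < N) :
    PowerSeries.coeff (R := ℤ) d (seriesSum f) = PowerSeries.coeff (R := ℤ) d (∑ ν ∈ range N, f ν) := by
  have key : ∀ M, d < M →
      PowerSeries.coeff (R := ℤ) d (∑ ν ∈ range M, f ν) = ∑ ν ∈ range (d + 1), PowerSeries.coeff (R := ℤ) d (f ν) := by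
    intro M hM
    rw [map_sum]
    refine (Finset.sum_subset ?_ ?_).symm
    · intro x hx; simp only [mem_range] at *; omega
    · intro x hx hnx
      simp only [mem_range] at hx hnx
      exact (PowerSeries.X_pow_dvd_iff.mp (h x)) d (by omega)
  rw [seriesSum, PowerSeries.coeff_mk, key (d + 1) (by omega), key N hN]

lemma dvd_F (ℓ : ℕ) (hℓ : 1 ≤ ℓ) (ν : ℕ) :
    (X : PowerSeries ℤ) ^ ν ∣
      X ^ (ν * ℓ) * ∏ i ∈ range (ν + 1), (1 - (X : PowerSeries ℤ) ^ (ℓ + i)) :=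
  dvd_mul_of_dvd_left (pow_dvd_pow _ (by nlinarith)) _

lemma dvd_T (ℓ : ℕ) (hℓ : 1 ≤ ℓ) (n : ℕ) :
    (X : PowerSeries ℤ) ^ n ∣
      (-1) ^ n * (X : PowerSeries ℤ) ^ (3 * ℓ * n + n * (3 * n + 1) / 2)
        * (1 - X ^ (2 * ℓ + 2 * n + 1)) := by
  refine dvd_mul_of_dvd_left (Dvd.dvd.mul_left ?_ _) _
  refine pow_dvd_pow _ (le_trans ?_ (Nat.le_add_right _ _))
  nlinarith


/-- `A ℓ k = (1-X^{ℓ+1})(1-X^{ℓ+2})⋯(1-X^{ℓ+k})`. -/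
noncomputable def eA (ℓ k : ℕ) : PowerSeries ℤ :=
  ∏ i ∈ range k, (1 - (X : PowerSeries ℤ) ^ (ℓ + 1 + i))

/-- The `ν`-th term of Euler's tower. -/
noncomputable def eF (ℓ ν : ℕ) : PowerSeries ℤ :=
  X ^ (ν * ℓ) * ∏ i ∈ range (ν + 1), (1 - (X : PowerSeries ℤ) ^ (ℓ + i))

lemma eF_eq (ℓ ν : ℕ) : eF ℓ ν = X ^ (ν * ℓ) * (eA ℓ ν * (1 - X ^ ℓ)) := by
  rw [eF, eA, Finset.prod_range_succ', add_zero]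
  congr 2
  exact Finset.prod_congr rfl fun i _ => by rw [show ℓ + (i + 1) = ℓ + 1 + i by omega]

lemma eF_succ (ℓ μ : ℕ) : eF (ℓ + 1) μ = X ^ (μ * (ℓ + 1)) * eA ℓ (μ + 1) := rfl

lemma eA_succ (ℓ k : ℕ) : eA ℓ (k + 1) = eA ℓ k * (1 - X ^ (ℓ + 1 + k)) :=
  Finset.prod_range_succ _ _

/-- Finite telescoping identity behind `P_ℓ = 1 - q^{2ℓ+1} - q^{3ℓ+2} P_{ℓ+1}`. -/
lemma tele (ℓ N : ℕ) :
    ∑ ν ∈ range (N + 1), eF ℓ ν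
      = 1 - X ^ (2 * ℓ + 1) - X ^ (3 * ℓ + 2) * (∑ μ ∈ range N, eF (ℓ + 1) μ)
        - X ^ ((N + 1) * ℓ) * eA ℓ (N + 1) := by
  induction N with
  | zero =>
      rw [Finset.sum_range_one, Finset.sum_range_zero, eF_eq, eA, eA,
        Finset.prod_range_zero, Finset.prod_range_one]
      ring_nf
  | succ N ih =>
      rw [Finset.sum_range_succ, ih, Finset.sum_range_succ (f := eF (ℓ + 1)), eF_eq, eF_succ]
      simp only [eA_succ]
      ring

lemma dvd_eF (ℓ : ℕ) (hℓ : 1 ≤ ℓ) (ν : ℕ) : (X : PowerSeries ℤ) ^ ν ∣ eF ℓ ν := dvd_F ℓ hℓ ν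

lemma eulerP_eF (ℓ : ℕ) : eulerP ℓ = seriesSum fun ν => eF ℓ ν := rfl

/-- The `n`-th term of the closed form. -/
noncomputable def eT (ℓ n : ℕ) : PowerSeries ℤ :=
  (-1) ^ n * (X : PowerSeries ℤ) ^ (3 * ℓ * n + n * (3 * n + 1) / 2)
    * (1 - (X : PowerSeries ℤ) ^ (2 * ℓ + 2 * n + 1))

lemma dvd_eT (ℓ : ℕ) (hℓ : 1 ≤ ℓ) (n : ℕ) : (X : PowerSeries ℤ) ^ n ∣ eT ℓ n := dvd_T ℓ hℓ n

lemma eT_succ (ℓ n : ℕ) : eT ℓ (n + 1) = -((X : PowerSeries ℤ) ^ (3 * ℓ + 2) * eT (ℓ + 1) n) := by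
  have hk : (n + 1) * (3 * (n + 1) + 1) / 2 = n * (3 * n + 1) / 2 + (3 * n + 2) := by
    rw [show (n + 1) * (3 * (n + 1) + 1) = n * (3 * n + 1) + 2 * (3 * n + 2) by ring,
      Nat.add_mul_div_left _ _ (by norm_num)]
  have he : 3 * ℓ * (n + 1) + (n + 1) * (3 * (n + 1) + 1) / 2
      = (3 * ℓ + 2) + (3 * (ℓ + 1) * n + n * (3 * n + 1) / 2) := by
    rw [hk]; generalize n * (3 * n + 1) / 2 = m; ring
  rw [eT, eT, he, show 2 * ℓ + 2 * (n + 1) + 1 = 2 * (ℓ + 1) + 2 * n + 1 by ring]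
  ring

lemma eT_zero (ℓ : ℕ) : eT ℓ 0 = 1 - (X : PowerSeries ℤ) ^ (2 * ℓ + 1) := by
  rw [eT]; norm_num

/-- Finite identity behind `S_ℓ = 1 - q^{2ℓ+1} - q^{3ℓ+2} S_{ℓ+1}`. -/
lemma teleT (ℓ N : ℕ) :
    ∑ n ∈ range (N + 1), eT ℓ n
      = 1 - X ^ (2 * ℓ + 1) - X ^ (3 * ℓ + 2) * (∑ n ∈ range N, eT (ℓ + 1) n) := by
  rw [Finset.sum_range_succ' (eT ℓ) N, eT_zero]
  simp only [eT_succ]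
  rw [Finset.sum_neg_distrib, ← Finset.mul_sum]
  ring

lemma P_rec (ℓ : ℕ) (hℓ : 1 ≤ ℓ) (d : ℕ) :
    PowerSeries.coeff (R := ℤ) d (eulerP ℓ)
      = PowerSeries.coeff (R := ℤ) d ((1 : PowerSeries ℤ) - X ^ (2 * ℓ + 1))
        - PowerSeries.coeff (R := ℤ) d ((X : PowerSeries ℤ) ^ (3 * ℓ + 2) * eulerP (ℓ + 1)) := by
  rw [eulerP_eF]
  rw [coeff_seriesSum_eq (fun ν => eF ℓ ν) (fun ν => dvd_eF ℓ hℓ ν) (show d < d + 1 + 1 by omega)]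
  rw [tele ℓ (d + 1), map_sub, map_sub]
  have hbound : PowerSeries.coeff (R := ℤ) d ((X : PowerSeries ℤ) ^ ((d + 1 + 1) * ℓ) * eA ℓ (d + 1 + 1)) = 0 := by
    rw [PowerSeries.coeff_X_pow_mul', if_neg]
    push_neg
    nlinarith
  have hmid : PowerSeries.coeff (R := ℤ) d ((X : PowerSeries ℤ) ^ (3 * ℓ + 2) * ∑ μ ∈ range (d + 1), eF (ℓ + 1) μ)
      = PowerSeries.coeff (R := ℤ) d ((X : PowerSeries ℤ) ^ (3 * ℓ + 2) * eulerP (ℓ + 1)) := by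
    rw [eulerP_eF, PowerSeries.coeff_X_pow_mul', PowerSeries.coeff_X_pow_mul']
    split_ifs with h
    · exact (coeff_seriesSum_eq _ (fun ν => dvd_eF (ℓ + 1) (by omega) ν) (by omega)).symm
    · rfl
  rw [hbound, hmid]
  ring

lemma S_rec (ℓ : ℕ) (hℓ : 1 ≤ ℓ) (d : ℕ) :
    PowerSeries.coeff (R := ℤ) d (seriesSum (eT ℓ))
      = PowerSeries.coeff (R := ℤ) d ((1 : PowerSeries ℤ) - X ^ (2 * ℓ + 1))
        - PowerSeries.coeff (R := ℤ) d ((X : PowerSeries ℤ) ^ (3 * ℓ + 2) * seriesSum (eT (ℓ + 1))) := by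
  rw [coeff_seriesSum_eq (eT ℓ) (fun n => dvd_eT ℓ hℓ n) (show d < d + 1 + 1 by omega)]
  rw [teleT ℓ (d + 1), map_sub]
  have hmid : PowerSeries.coeff (R := ℤ) d ((X : PowerSeries ℤ) ^ (3 * ℓ + 2) * ∑ n ∈ range (d + 1), eT (ℓ + 1) n)
      = PowerSeries.coeff (R := ℤ) d ((X : PowerSeries ℤ) ^ (3 * ℓ + 2) * seriesSum (eT (ℓ + 1))) := by
    rw [PowerSeries.coeff_X_pow_mul', PowerSeries.coeff_X_pow_mul']
    split_ifs with h
    · exact (coeff_seriesSum_eq _ (fun n => dvd_eT (ℓ + 1) (by omega) n) (by omega)).symm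
    · rfl
  rw [hmid]

/-- For every `ℓ ≥ 1`,
`P_ℓ = ∑_{n=0}^∞ (-1)^n q^{3ℓn + n(3n+1)/2} (1 - q^{2ℓ+2n+1})` in `ℤ[[q]]`. -/
theorem eulerP_closed_form (ℓ : ℕ) (hℓ : 1 ≤ ℓ) :
    eulerP ℓ =
      seriesSum fun n =>
        (-1) ^ n * PowerSeries.X ^ (3 * ℓ * n + n * (3 * n + 1) / 2)
          * (1 - PowerSeries.X ^ (2 * ℓ + 2 * n + 1)) := by
  have main : ∀ d ℓ, 1 ≤ ℓ → PowerSeries.coeff (R := ℤ) d (eulerP ℓ) = PowerSeries.coeff (R := ℤ) d (seriesSum (eT ℓ)) := by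
    intro d
    induction d using Nat.strong_induction_on with
    | _ d ih =>
      intro ℓ hℓ
      rw [P_rec ℓ hℓ d, S_rec ℓ hℓ d]
      congr 1
      rw [PowerSeries.coeff_X_pow_mul', PowerSeries.coeff_X_pow_mul']
      split_ifs with h
      · exact ih _ (by omega) (ℓ + 1) (by omega)
      · rfl
  exact PowerSeries.ext fun d => main d ℓ hℓ
end
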